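/- Let q ≥ 1, α > 0, and let φ : [0,∞) → ℝ^q be continuous and bounded. Define the Kreisselmeier extended regressor Φ(t) = ∫₀ᵗ e^{−α(t−s)}·φ(s)·φ(s)ᵀ ds ∈ ℝ^{q×q} and Δ(t) = det Φ(t). If φ is (T,δ)-PE for some T > 0 and δ > 0, then Δ is PE, i.e., there exist T' > 0 and δ' > 0 such that ∫_t^{t+T'} Δ(s)² ds ≥ δ' for all t ≥ 0. -/

import Mathlib

open MeasureTheory

/-- The matrix `∫_a^b φ(s) φ(s)ᵀ ds`, defined entrywise. -/
noncomputable def gramOn (q : ℕ) (φ : ℝ → Fin q → ℝ) (a b : ℝ) :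
    Matrix (Fin q) (Fin q) ℝ :=
  Matrix.of fun i j => ∫ s in a..b, φ s i * φ s j

/-- The Kreisselmeier extended regressor
`Φ(t) = ∫₀ᵗ e^{-α(t-s)} φ(s) φ(s)ᵀ ds`, defined entrywise. -/
noncomputable def kreisselmeierPhi (q : ℕ) (α : ℝ) (φ : ℝ → Fin q → ℝ) (t : ℝ) :
    Matrix (Fin q) (Fin q) ℝ :=
  Matrix.of fun i j => ∫ s in (0:ℝ)..t, Real.exp (-α * (t - s)) * (φ s i * φ s j)

section Aux

open Matrix

variable {q : ℕ} {α : ℝ} {φ : ℝ → Fin q → ℝ}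

lemma phi_comp_cont (hφc : Continuous φ) (i j : Fin q) :
    Continuous fun s => φ s i * φ s j :=
  ((continuous_apply i).comp hφc).mul ((continuous_apply j).comp hφc)

lemma phi_entry_cont (hφc : Continuous φ) (i j : Fin q) :
    Continuous (fun t => (kreisselmeierPhi q α φ t) i j) := by
  have hint : Continuous (fun s => Real.exp (α * s) * (φ s i * φ s j)) :=
    ((Real.continuous_exp.comp (continuous_const.mul continuous_id))).mul
      (phi_comp_cont hφc i j)
  have h1 : Continuous (fun t => ∫ s in (0:ℝ)..t, Real.exp (α * s) * (φ s i * φ s j)) :=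
    intervalIntegral.continuous_primitive (fun a b => hint.intervalIntegrable a b) 0
  have heq : ∀ t, (kreisselmeierPhi q α φ t) i j
      = Real.exp (-α * t) * ∫ s in (0:ℝ)..t, Real.exp (α * s) * (φ s i * φ s j) := by
    intro t
    rw [← intervalIntegral.integral_const_mul]
    simp only [kreisselmeierPhi, Matrix.of_apply]
    congr 1
    ext s
    rw [show -α*(t-s) = -α*t + α*s by ring, Real.exp_add]
    ring
  simp only [heq]
  exact (Real.continuous_exp.comp (continuous_const.mul continuous_id)).mul h1

lemma dot_integral_form (hφc : Continuous φ) (x : Fin q → ℝ) (g : ℝ → ℝ)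
    (hg : Continuous g) (a b : ℝ) :
    x ⬝ᵥ ((Matrix.of fun i j => ∫ s in a..b, g s * (φ s i * φ s j)) *ᵥ x)
      = ∫ s in a..b, g s * (∑ i, φ s i * x i)^2 := by
  have hint : ∀ i j : Fin q, IntervalIntegrable
      (fun s => x i * (g s * (φ s i * φ s j) * x j)) volume a b :=
    fun i j => (continuous_const.mul ((hg.mul (phi_comp_cont hφc i j)).mul
      continuous_const)).intervalIntegrable a b
  have lhs_eq : x ⬝ᵥ ((Matrix.of fun i j => ∫ s in a..b, g s * (φ s i * φ s j)) *ᵥ x)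
      = ∑ i, ∑ j, ∫ s in a..b, x i * (g s * (φ s i * φ s j) * x j) := by
    simp only [dotProduct, Matrix.mulVec, Matrix.of_apply]
    refine Finset.sum_congr rfl fun i _ => ?_
    rw [Finset.mul_sum]
    refine Finset.sum_congr rfl fun j _ => ?_
    rw [← intervalIntegral.integral_mul_const, ← intervalIntegral.integral_const_mul]
  have step1 : ∀ i : Fin q, (∑ j, ∫ s in a..b, x i * (g s * (φ s i * φ s j) * x j))
      = ∫ s in a..b, ∑ j, x i * (g s * (φ s i * φ s j) * x j) :=
    fun i => (intervalIntegral.integral_finset_sum (fun j _ => hint i j)).symm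
  have hcont2 : ∀ i : Fin q, Continuous (fun s => ∑ j, x i * (g s * (φ s i * φ s j) * x j)) :=
    fun i => continuous_finset_sum _ (fun j _ => continuous_const.mul
      ((hg.mul (phi_comp_cont hφc i j)).mul continuous_const))
  have step2 : (∑ i : Fin q, ∫ s in a..b, ∑ j, x i * (g s * (φ s i * φ s j) * x j))
      = ∫ s in a..b, ∑ i, ∑ j, x i * (g s * (φ s i * φ s j) * x j) :=
    (intervalIntegral.integral_finset_sum
      (fun i _ => (hcont2 i).intervalIntegrable a b)).symm
  rw [lhs_eq]
  simp only [step1]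
  rw [step2]
  congr 1
  ext s
  rw [sq, Finset.sum_mul_sum, Finset.mul_sum]
  refine Finset.sum_congr rfl fun i _ => ?_
  rw [Finset.mul_sum]
  refine Finset.sum_congr rfl fun j _ => ?_
  ring


lemma det_ge_of_shift {q : ℕ} (M : Matrix (Fin q) (Fin q) ℝ) (c : ℝ) (hc : 0 ≤ c)
    (h : (M - c • 1).PosSemidef) : c ^ q ≤ M.det := by
  have hsm : ((c : ℝ) • (1 : Matrix (Fin q) (Fin q) ℝ)).IsHermitian := by
    unfold Matrix.IsHermitian
    rw [Matrix.conjTranspose_smul, Matrix.conjTranspose_one, star_trivial]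
  have hM : M.IsHermitian := by
    have h2 : M = (M - c • 1) + c • 1 := by abel
    rw [h2]
    exact h.isHermitian.add hsm
  have heig : ∀ i, c ≤ hM.eigenvalues i := by
    intro i
    set v : Fin q → ℝ := ⇑(hM.eigenvectorBasis i) with hv
    have hstar : star v = v := by funext k; simp
    have hnorm : v ⬝ᵥ v = 1 := by
      have h1 : ‖hM.eigenvectorBasis i‖ = 1 := hM.eigenvectorBasis.orthonormal.1 i
      have h2 : (inner ℝ (hM.eigenvectorBasis i) (hM.eigenvectorBasis i) : ℝ) = 1 := by
        rw [real_inner_self_eq_norm_sq, h1, one_pow]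
      rw [EuclideanSpace.inner_eq_star_dotProduct] at h2
      simpa [dotProduct] using h2
    have hmv : M *ᵥ v = hM.eigenvalues i • v := hM.mulVec_eigenvectorBasis i
    have h2 := h.dotProduct_mulVec_nonneg v
    rw [hstar, Matrix.sub_mulVec, dotProduct_sub, hmv, Matrix.smul_mulVec,
      Matrix.one_mulVec, dotProduct_smul, dotProduct_smul, hnorm] at h2
    simp only [smul_eq_mul, mul_one] at h2
    linarith
  have hdet : M.det = ∏ i, hM.eigenvalues i := by
    simpa using hM.det_eq_prod_eigenvalues
  rw [hdet]
  calc c ^ q = ∏ _i : Fin q, c := by simp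
    _ ≤ ∏ i, hM.eigenvalues i := Finset.prod_le_prod (fun _ _ => hc) (fun i _ => heig i)

lemma key_psd (hφc : Continuous φ) (hα : 0 < α) {T δ : ℝ} (hT : 0 < T) (hδ : 0 < δ)
    (hPE : ∀ t, 0 ≤ t →
      (gramOn q φ t (t + T) - δ • (1 : Matrix (Fin q) (Fin q) ℝ)).PosSemidef) :
    ∀ s, T ≤ s → (kreisselmeierPhi q α φ s
      - (Real.exp (-α * T) * δ) • (1 : Matrix (Fin q) (Fin q) ℝ)).PosSemidef := by
  intro s hs
  set c : ℝ := Real.exp (-α * T) * δ with hc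
  have hgc : Continuous fun u => Real.exp (-α * (s - u)) :=
    Real.continuous_exp.comp (continuous_const.mul (continuous_const.sub continuous_id))
  rw [Matrix.posSemidef_iff_dotProduct_mulVec]
  constructor
  · have hΦ : (kreisselmeierPhi q α φ s).IsHermitian := by
      unfold Matrix.IsHermitian
      ext i j
      simp only [kreisselmeierPhi, Matrix.conjTranspose_apply, Matrix.of_apply, star_trivial]
      congr 1
      ext u
      ring
    refine hΦ.sub ?_
    unfold Matrix.IsHermitian
    rw [Matrix.conjTranspose_smul, Matrix.conjTranspose_one, star_trivial]
  · intro x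
    have hstar : star x = x := by funext k; simp
    set g : ℝ → ℝ := fun u => (∑ i, φ u i * x i)^2 with hgdef
    have hgcont : Continuous g := (continuous_finset_sum _ fun i _ =>
      ((continuous_apply i).comp hφc).mul continuous_const).pow 2
    have hgnn : ∀ u, 0 ≤ g u := fun u => sq_nonneg _
    have hΦx : x ⬝ᵥ (kreisselmeierPhi q α φ s *ᵥ x)
        = ∫ u in (0:ℝ)..s, Real.exp (-α * (s - u)) * g u := by
      unfold kreisselmeierPhi
      exact dot_integral_form hφc x _ hgc 0 s
    have hGx : x ⬝ᵥ (gramOn q φ (s - T) ((s - T) + T) *ᵥ x)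
        = ∫ u in (s - T)..(s - T + T), g u := by
      have h0 := dot_integral_form hφc x (fun _ => (1:ℝ)) continuous_const (s - T) (s - T + T)
      simp only [one_mul] at h0
      unfold gramOn
      exact h0
    have hstT : (0:ℝ) ≤ s - T := by linarith
    have hXnn : 0 ≤ x ⬝ᵥ x := Finset.sum_nonneg fun i _ => mul_self_nonneg _
    -- lower bound for the Gram quadratic form
    have hG := (hPE (s - T) hstT).dotProduct_mulVec_nonneg x
    rw [hstar, Matrix.sub_mulVec, dotProduct_sub, Matrix.smul_mulVec,
      Matrix.one_mulVec, dotProduct_smul, smul_eq_mul] at hG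
    -- hG : 0 ≤ x ⬝ᵥ G x - δ * (x ⬝ᵥ x)
    have hst : s - T + T = s := by ring
    -- integral comparison
    have hii1 : IntervalIntegrable (fun u => Real.exp (-α * (s - u)) * g u) volume 0 (s - T) :=
      (hgc.mul hgcont).intervalIntegrable _ _
    have hii2 : IntervalIntegrable (fun u => Real.exp (-α * (s - u)) * g u) volume (s - T) s :=
      (hgc.mul hgcont).intervalIntegrable _ _
    have hsplit := intervalIntegral.integral_add_adjacent_intervals (μ := volume) hii1 hii2
    have h1 : 0 ≤ ∫ u in (0:ℝ)..(s - T), Real.exp (-α * (s - u)) * g u :=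
      intervalIntegral.integral_nonneg hstT fun u _ =>
        mul_nonneg (Real.exp_nonneg _) (hgnn u)
    have h2 : (∫ u in (s - T)..s, Real.exp (-α * T) * g u)
        ≤ ∫ u in (s - T)..s, Real.exp (-α * (s - u)) * g u := by
      refine intervalIntegral.integral_mono_on (by linarith)
        ((continuous_const.mul hgcont).intervalIntegrable _ _)
        ((hgc.mul hgcont).intervalIntegrable _ _) fun u hu => ?_
      have h3 : -α * T ≤ -α * (s - u) := by nlinarith [hu.1, hu.2]
      exact mul_le_mul_of_nonneg_right (Real.exp_le_exp.2 h3) (hgnn u)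
    have h4 : (∫ u in (s - T)..s, Real.exp (-α * T) * g u)
        = Real.exp (-α * T) * ∫ u in (s - T)..s, g u :=
      intervalIntegral.integral_const_mul _ _
    rw [hst] at hGx hG
    have h5 : δ * (x ⬝ᵥ x) ≤ ∫ u in (s - T)..s, g u := by linarith
    rw [hstar, Matrix.sub_mulVec, dotProduct_sub, Matrix.smul_mulVec,
      Matrix.one_mulVec, dotProduct_smul, smul_eq_mul, hΦx]
    have h6 := mul_le_mul_of_nonneg_left h5 (Real.exp_nonneg (-α * T))
    have hce : c * (x ⬝ᵥ x) = Real.exp (-α * T) * (δ * (x ⬝ᵥ x)) := by rw [hc]; ring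
    linarith

end Aux

/-- Result R1, ⇒: If `φ` is `(T,δ)`-PE then `Δ = det Φ` is PE. -/
theorem kreisselmeier_pe_implies_det_pe (q : ℕ) (hq : 1 ≤ q) (α : ℝ)
    (hα : 0 < α) (φ : ℝ → Fin q → ℝ) (hφc : Continuous φ)
    (hφb : ∃ C, ∀ t, 0 ≤ t → ‖φ t‖ ≤ C)
    (T δ : ℝ) (hT : 0 < T) (hδ : 0 < δ)
    (hPE : ∀ t, 0 ≤ t →
      (gramOn q φ t (t + T) - δ • (1 : Matrix (Fin q) (Fin q) ℝ)).PosSemidef) :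
    ∃ T' > (0:ℝ), ∃ δ' > (0:ℝ), ∀ t, 0 ≤ t →
      δ' ≤ ∫ s in t..t + T', ((kreisselmeierPhi q α φ s).det) ^ 2 := by
  set c : ℝ := Real.exp (-α * T) * δ with hc
  have hcpos : 0 < c := mul_pos (Real.exp_pos _) hδ
  have hdetlb : ∀ s, T ≤ s → c ^ q ≤ (kreisselmeierPhi q α φ s).det := fun s hs =>
    det_ge_of_shift _ _ hcpos.le (key_psd hφc hα hT hδ hPE s hs)
  have hΦcont : Continuous fun t => kreisselmeierPhi q α φ t :=
    continuous_matrix fun i j => phi_entry_cont hφc i j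
  have hsqc : Continuous fun t => ((kreisselmeierPhi q α φ t).det) ^ 2 :=
    hΦcont.matrix_det.pow 2
  refine ⟨T + T, by linarith, T * (c ^ q) ^ 2, by positivity, fun t ht => ?_⟩
  have hsplit := intervalIntegral.integral_add_adjacent_intervals (μ := volume)
    (hsqc.intervalIntegrable t (t + T)) (hsqc.intervalIntegrable (t + T) (t + (T + T)))
  have h1 : 0 ≤ ∫ s in t..(t + T), ((kreisselmeierPhi q α φ s).det) ^ 2 :=
    intervalIntegral.integral_nonneg (by linarith) fun s _ => sq_nonneg _
  have h2 : (∫ s in (t + T)..(t + (T + T)), (c ^ q) ^ 2)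
      ≤ ∫ s in (t + T)..(t + (T + T)), ((kreisselmeierPhi q α φ s).det) ^ 2 := by
    refine intervalIntegral.integral_mono_on (by linarith)
      (continuous_const.intervalIntegrable _ _) (hsqc.intervalIntegrable _ _) fun s hs => ?_
    exact pow_le_pow_left₀ (pow_nonneg hcpos.le q) (hdetlb s (by linarith [hs.1])) 2
  have h3 : (∫ s in (t + T)..(t + (T + T)), (c ^ q) ^ 2) = T * (c ^ q) ^ 2 := by
    rw [intervalIntegral.integral_const, smul_eq_mul]
    ring
  linarith
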